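/- Let F_q be a finite field of characteristic 2 and let ψ : F_q → ℂ^× be a nontrivial additive character. Then there exists a unique ξ ∈ F_q^× such that Ker(ψ) = { ξx² + x : x ∈ F_q }. -/

import Mathlib

open Finset

/-- for a nontrivial additive character `ψ` of a finite field of
characteristic 2, there is a unique `ξ ≠ 0` with `Ker ψ = { ξx² + x }`. -/
theorem stmt_6 {F : Type*} [Field F] [Fintype F] [CharP F 2]
    (ψ : AddChar F ℂ) (hψ : ∃ x : F, ψ x ≠ 1) :
    ∃! ξ : F, ξ ≠ 0 ∧ {x : F | ψ x = 1} = Set.range (fun x : F => ξ * x ^ 2 + x) := by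
  classical
  haveI : Fact (Nat.Prime 2) := ⟨Nat.prime_two⟩
  have hψ1 : ψ ≠ 1 := AddChar.ne_one_iff.2 hψ
  -- squaring is a bijection
  have hsq : Function.Bijective (fun x : F => x ^ 2) := by
    have := (frobeniusEquiv F 2).bijective
    exact this
  -- values of ψ square to 1
  have hsq1 : ∀ x : F, ψ x * ψ x = 1 := by
    intro x
    rw [← AddChar.map_add_eq_mul, CharTwo.add_self_eq_zero, AddChar.map_zero_eq_one]
  have hval : ∀ x : F, ψ x = 1 ∨ ψ x = -1 := fun x => mul_self_eq_one_iff.mp (hsq1 x)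
  -- if ψ(cx) = 1 for all x then c = 0
  have hker : ∀ c : F, (∀ x : F, ψ (c * x) = 1) → c = 0 := by
    intro c hc
    by_contra h0
    obtain ⟨x, hx⟩ := hψ
    have h := hc (c⁻¹ * x)
    rw [← mul_assoc, mul_inv_cancel₀ h0, one_mul] at h
    exact hx h
  -- existence of ξ with ψ (ξ * x^2) = ψ x for all x
  obtain ⟨ξ, hξeq⟩ : ∃ ξ : F, ∀ x : F, ψ (ξ * x ^ 2) = ψ x := by
    let e : F ≃+* F := frobeniusEquiv F 2
    let f : F →+ F := AddMonoidHom.mk' (fun y => e.symm y) (fun a b => map_add _ _ _)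
    let χ : AddChar F ℂ := ψ.compAddMonoidHom f
    have hprim : ψ.IsPrimitive := AddChar.IsPrimitive.of_ne_one hψ1
    have hinj : Function.Injective ψ.mulShift :=
      AddChar.to_mulShift_inj_of_isPrimitive hprim
    have hbij : Function.Bijective ψ.mulShift :=
      (Fintype.bijective_iff_injective_and_card _).2 ⟨hinj, AddChar.card_eq.symm⟩
    obtain ⟨ξ, hξ⟩ := hbij.surjective χ
    refine ⟨ξ, fun x => ?_⟩
    have h1 : ψ.mulShift ξ (x ^ 2) = χ (x ^ 2) := by rw [hξ]
    have h2 : f (x ^ 2) = x := by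
      show e.symm (x ^ 2) = x
      have : e x = x ^ 2 := rfl
      rw [← this, RingEquiv.symm_apply_apply]
    rw [AddChar.mulShift_apply] at h1
    rw [h1]
    show ψ (f (x ^ 2)) = ψ x
    rw [h2]
  -- ξ ≠ 0
  have hξ0 : ξ ≠ 0 := by
    intro h
    obtain ⟨x, hx⟩ := hψ
    exact hx (by rw [← hξeq x, h, zero_mul, AddChar.map_zero_eq_one])
  have h1 : ∀ x : F, ψ (ξ * x ^ 2 + x) = 1 := fun x => by
    rw [AddChar.map_add_eq_mul, hξeq x]; exact hsq1 x
  -- counting: for any η ≠ 0, the range of x ↦ η x² + x has ncard * 2 = card F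
  have hcardS : ∀ η : F, η ≠ 0 →
      (Set.range (fun x : F => η * x ^ 2 + x)).ncard * 2 = Fintype.card F := by
    intro η hη
    let L : F →+ F := AddMonoidHom.mk' (fun x => η * x ^ 2 + x)
      (fun a b => by
        show η * (a + b) ^ 2 + (a + b) = (η * a ^ 2 + a) + (η * b ^ 2 + b)
        rw [CharTwo.add_sq]; ring)
    have hkerL : (L.ker : Set F) = {0, η⁻¹} := by
      ext x
      simp only [SetLike.mem_coe, AddMonoidHom.mem_ker, Set.mem_insert_iff,
        Set.mem_singleton_iff]
      constructor
      · intro h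
        have hfac : x * (η * x + 1) = 0 := by
          have : η * x ^ 2 + x = 0 := h
          rw [← this]; ring
        rcases mul_eq_zero.mp hfac with h' | h'
        · exact Or.inl h'
        · refine Or.inr ?_
          have hmul : η * x = 1 := by
            have h2 : η * x = -1 := eq_neg_of_add_eq_zero_left h'
            rwa [CharTwo.neg_eq] at h2
          exact (inv_eq_of_mul_eq_one_right hmul).symm
      · rintro (rfl | rfl)
        · show η * 0 ^ 2 + 0 = 0; ring
        · show η * (η⁻¹) ^ 2 + η⁻¹ = 0
          have : η * (η⁻¹) ^ 2 = η⁻¹ := by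
            field_simp [pow_two]
          rw [this, CharTwo.add_self_eq_zero]
    have hk2 : Nat.card L.ker = 2 := by
      have h : Nat.card L.ker = Nat.card ({0, η⁻¹} : Set F) :=
        Nat.card_congr (Equiv.setCongr hkerL)
      rw [h, Nat.card_coe_set_eq, Set.ncard_pair (Ne.symm (inv_ne_zero hη))]
    have hiso : Nat.card (F ⧸ L.ker) = Nat.card L.range :=
      Nat.card_congr (QuotientAddGroup.quotientKerEquivRange L).toEquiv
    have htot : Nat.card F = Nat.card (F ⧸ L.ker) * Nat.card L.ker :=
      AddSubgroup.card_eq_card_quotient_mul_card_addSubgroup L.ker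
    have hrange : (Set.range (fun x : F => η * x ^ 2 + x)).ncard = Nat.card L.range := by
      rw [← Nat.card_coe_set_eq]
      congr 1
    rw [hk2, hiso, Nat.card_eq_fintype_card (α := F)] at htot
    rw [hrange]
    omega
  -- counting: the kernel of ψ
  have hcardK : ({x : F | ψ x = 1}).ncard * 2 = Fintype.card F := by
    have hsum : ∑ a, ψ a = 0 := AddChar.sum_eq_zero_of_ne_one hψ1
    set k := (univ.filter fun x : F => ψ x = 1).card with hk
    set m := (univ.filter fun x : F => ¬ ψ x = 1).card with hm
    have hsplit : ∑ a, ψ a = (k : ℂ) - m := by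
      rw [← Finset.sum_filter_add_sum_filter_not univ (fun x : F => ψ x = 1)]
      have e1 : ∑ a ∈ univ.filter fun x : F => ψ x = 1, ψ a = (k : ℂ) := by
        rw [Finset.sum_congr rfl (fun x hx => (Finset.mem_filter.mp hx).2)]
        simp [hk]
      have e2 : ∑ a ∈ univ.filter fun x : F => ¬ ψ x = 1, ψ a = -(m : ℂ) := by
        rw [Finset.sum_congr rfl (fun x hx => ((hval x).resolve_left
          (Finset.mem_filter.mp hx).2 : ψ x = -1))]
        simp [hm]
      rw [e1, e2]; ring
    have hkm : (k : ℂ) = m := by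
      have := hsplit.symm.trans hsum
      linear_combination this
    have hkm' : k = m := by exact_mod_cast hkm
    have htot : k + m = Fintype.card F := by
      rw [hk, hm]
      exact Finset.card_filter_add_card_filter_not _
    have hset : {x : F | ψ x = 1} = ((univ.filter fun x : F => ψ x = 1) : Finset F) := by
      ext x; simp
    rw [hset, Set.ncard_coe_finset, ← hk]
    omega
  refine ⟨ξ, ⟨hξ0, ?_⟩, ?_⟩
  · -- set equality
    have hsub : Set.range (fun x : F => ξ * x ^ 2 + x) ⊆ {x : F | ψ x = 1} := by
      rintro _ ⟨x, rfl⟩; exact h1 x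
    refine (Set.eq_of_subset_of_ncard_le hsub ?_ (Set.toFinite _)).symm
    have := hcardS ξ hξ0
    omega
  · -- uniqueness
    rintro η ⟨hη0, hη⟩
    have hηker : ∀ x : F, ψ (η * x ^ 2 + x) = 1 := by
      intro x
      have : η * x ^ 2 + x ∈ {y : F | ψ y = 1} := hη ▸ Set.mem_range_self x
      exact this
    have key : ∀ x : F, ψ ((η + ξ) * x ^ 2) = 1 := by
      intro x
      have : (η + ξ) * x ^ 2 = (η * x ^ 2 + x) + (ξ * x ^ 2 + x) := by
        rw [add_mul]
        have := CharTwo.add_self_eq_zero (R := F) x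
        linear_combination -this
      rw [this, AddChar.map_add_eq_mul, hηker x, h1 x, one_mul]
    have : η + ξ = 0 := by
      apply hker
      intro y
      obtain ⟨x, hx⟩ := hsq.surjective y
      rw [← hx]; exact key x
    have h2 : η = -ξ := eq_neg_of_add_eq_zero_left this
    rwa [CharTwo.neg_eq] at h2
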